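/- Let β > 1 be a real number. The (−β)-shift S_{−β} is a subshift of finite type if and only if d_{−β}(−β/(β+1)) is purely periodic. -/

import Mathlib

/-- The (-β)-transformation `T_{-β}(x) = -βx - ⌊-βx + β/(β+1)⌋`. -/
noncomputable def negBetaT (β : ℝ) (x : ℝ) : ℝ :=
  -β * x - ⌊-β * x + β / (β + 1)⌋

/-- The digits of the (-β)-expansion: `negBetaDigit β x n` is the digit
`x_{n+1} = ⌊-β T_{-β}^n(x) + β/(β+1)⌋`. -/
noncomputable def negBetaDigit (β : ℝ) (x : ℝ) (n : ℕ) : ℤ :=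
  ⌊-β * (negBetaT β)^[n] x + β / (β + 1)⌋

/-- The word `d = d_{-β}(-β/(β+1))`. -/
noncomputable def dmb (β : ℝ) : ℕ → ℤ := negBetaDigit β (-β / (β + 1))

/-- Strict alternate order on one-sided infinite words (index `k` holds the letter at
position `k+1`, whence the sign `(-1)^(k+1)`). -/
def AltLt (u v : ℕ → ℤ) : Prop :=
  ∃ k : ℕ, (∀ i < k, u i = v i) ∧ (-1 : ℤ) ^ (k + 1) * (u k - v k) < 0

/-- Non-strict alternate order. -/
def AltLe (u v : ℕ → ℤ) : Prop := u = v ∨ AltLt u v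

/-- The one-sided word read in the bi-infinite word `w` from position `n` on. -/
def shiftSeq (w : ℤ → ℤ) (n : ℤ) : ℕ → ℤ := fun i => w (n + i)

open scoped Classical

/-- The word `d* = d*_{-β}(1/(β+1))`: if `d = (d_1 ⋯ d_{2p+1})^ω` is purely periodic with
(minimal) odd period `2p+1`, then `d* = (0 d_1 ⋯ d_{2p} (d_{2p+1}-1))^ω`; otherwise
`d* = 0d`. -/
noncomputable def dstar (β : ℝ) : ℕ → ℤ :=
  if h : ∃ p : ℕ, 0 < p ∧ Odd p ∧ ∀ i, dmb β (i + p) = dmb β i then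
    fun n =>
      let p := Nat.find h
      let r := n % (p + 1)
      if r = 0 then 0 else if r = p then dmb β (p - 1) - 1 else dmb β (r - 1)
  else fun n => if n = 0 then 0 else dmb β (n - 1)

/-- The (-β)-shift: all bi-infinite words over `A_{-β} = {0,…,⌊β⌋}` all of whose shifts
lie alternately between `d` and `d*`. -/
def negBetaShift (β : ℝ) : Set (ℤ → ℤ) :=
  {w | (∀ i, 0 ≤ w i ∧ w i ≤ ⌊β⌋) ∧
    ∀ n : ℤ, AltLe (dmb β) (shiftSeq w n) ∧ AltLe (shiftSeq w n) (dstar β)}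

/-- `u` is a factor of the bi-infinite word `w`. -/
def IsFactorOf (u : List ℤ) (w : ℤ → ℤ) : Prop :=
  ∃ n : ℤ, ∀ i : ℕ, i < u.length → u.getD i 0 = w (n + i)

-- ====== analytic core ======
namespace NBproof

noncomputable def nbC (β : ℝ) : ℝ := β / (β + 1)

/-- membership in the fundamental interval I = [-c, 1-c) -/
def nbI (β x : ℝ) : Prop := -nbC β ≤ x ∧ x < 1 - nbC β

lemma nbT_eq (β x : ℝ) : negBetaT β x = Int.fract (-β * x + nbC β) - nbC β := by
  simp only [negBetaT, Int.fract, nbC]; ring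

lemma nbT_mem (β : ℝ) (x : ℝ) : nbI β (negBetaT β x) := by
  rw [nbT_eq]
  constructor
  · have := Int.fract_nonneg (-β * x + nbC β); linarith
  · have := Int.fract_lt_one (-β * x + nbC β); linarith

lemma nbx0_mem (β : ℝ) (hβ : 1 < β) : nbI β (-nbC β) := by
  exact ⟨le_refl _, by linarith⟩

lemma nb_iter_mem (β : ℝ) (hβ : 1 < β) {x : ℝ} (hx : nbI β x) (n : ℕ) :
    nbI β ((negBetaT β)^[n] x) := by
  cases n with
  | zero => simpa using hx
  | succ n => rw [Function.iterate_succ_apply']; exact nbT_mem β _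

lemma nbC_mul (β : ℝ) (hβ : 1 < β) : nbC β * (β + 1) = β := by
  have : β + 1 ≠ 0 := by linarith
  rw [nbC, div_mul_cancel₀ _ this]

/-- digit bounds for points of I -/
lemma nb_digit0_bounds (β : ℝ) (hβ : 1 < β) {x : ℝ} (hx : nbI β x) :
    0 ≤ ⌊-β * x + nbC β⌋ ∧ ⌊-β * x + nbC β⌋ ≤ ⌊β⌋ := by
  have hb0 : (0:ℝ) < β := by linarith
  have hc := nbC_mul β hβ
  constructor
  · apply Int.floor_nonneg.mpr
    have h2 : β * x < β * (1 - nbC β) := by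
      apply mul_lt_mul_of_pos_left hx.2 hb0
    nlinarith
  · apply Int.floor_le_floor
    have h2 : β * (-nbC β) ≤ β * x := mul_le_mul_of_nonneg_left hx.1 hb0.le
    nlinarith

lemma nb_digit_bounds (β : ℝ) (hβ : 1 < β) {x : ℝ} (hx : nbI β x) (n : ℕ) :
    0 ≤ negBetaDigit β x n ∧ negBetaDigit β x n ≤ ⌊β⌋ := by
  have := nb_digit0_bounds β hβ (nb_iter_mem β hβ hx n)
  simpa [negBetaDigit, nbC] using this

lemma nb_digit_shift (β x : ℝ) (n i : ℕ) :
    negBetaDigit β x (n + i) = negBetaDigit β ((negBetaT β)^[n] x) i := by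
  simp only [negBetaDigit]
  rw [add_comm n i, Function.iterate_add_apply]

lemma nb_dmb_eq (β : ℝ) : dmb β = fun i => negBetaDigit β (-nbC β) i := by
  funext i
  simp only [dmb, nbC, neg_div]

lemma nb_dmb0 (β : ℝ) (hβ : 1 < β) : dmb β 0 = ⌊β⌋ := by
  have h1 : β + 1 ≠ 0 := by positivity
  simp only [dmb, negBetaDigit, Function.iterate_zero, id_eq]
  congr 1
  field_simp

lemma nb_dmb0_pos (β : ℝ) (hβ : 1 < β) : 1 ≤ dmb β 0 := by
  rw [nb_dmb0 β hβ]
  exact Int.le_floor.mpr (by exact_mod_cast hβ.le)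

/-- the telescoping difference formula -/
lemma nb_iterate_sub (β x y : ℝ) (n : ℕ)
    (h : ∀ i < n, negBetaDigit β x i = negBetaDigit β y i) :
    (negBetaT β)^[n] x - (negBetaT β)^[n] y = (-β)^n * (x - y) := by
  induction n with
  | zero => simp
  | succ n ih =>
    have hd : (negBetaDigit β x n : ℝ) = negBetaDigit β y n := by
      have := h n (Nat.lt_succ_self n); exact_mod_cast this
    have ihh := ih (fun i hi => h i (hi.trans (Nat.lt_succ_self n)))
    rw [Function.iterate_succ_apply', Function.iterate_succ_apply']
    have hx : negBetaT β ((negBetaT β)^[n] x)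
        = -β * (negBetaT β)^[n] x - (negBetaDigit β x n : ℝ) := by
      simp [negBetaT, negBetaDigit]
    have hy : negBetaT β ((negBetaT β)^[n] y)
        = -β * (negBetaT β)^[n] y - (negBetaDigit β y n : ℝ) := by
      simp [negBetaT, negBetaDigit]
    rw [hx, hy, hd]
    have : -β * (negBetaT β)^[n] x - -β * (negBetaT β)^[n] y
        = -β * ((negBetaT β)^[n] x - (negBetaT β)^[n] y) := by ring
    rw [sub_sub_sub_cancel_right, this, ihh]
    ring

/-- injectivity: equal digit sequences give equal points (within I) -/
lemma nb_inj (β : ℝ) (hβ : 1 < β) {x y : ℝ} (hx : nbI β x) (hy : nbI β y)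
    (h : ∀ i, negBetaDigit β x i = negBetaDigit β y i) : x = y := by
  by_contra hne
  have hδ : 0 < |x - y| := abs_pos.mpr (sub_ne_zero.mpr hne)
  obtain ⟨n, hn⟩ := pow_unbounded_of_one_lt (1 / |x - y|) hβ
  have hsub := nb_iterate_sub β x y n (fun i _ => h i)
  have hmx := nb_iter_mem β hβ hx n
  have hmy := nb_iter_mem β hβ hy n
  have hlt : |(negBetaT β)^[n] x - (negBetaT β)^[n] y| < 1 := by
    rw [abs_sub_lt_iff]
    constructor <;> [skip; skip] <;>
      (first | (have := hmx.1; have := hmx.2; have := hmy.1; have := hmy.2; linarith))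
  rw [hsub, abs_mul, abs_pow, abs_neg, abs_of_pos (by linarith : (0:ℝ) < β)] at hlt
  have : 1 / |x - y| < β ^ n := hn
  have h2 : 1 < β ^ n * |x - y| := by
    rw [div_lt_iff₀ hδ] at this
    linarith
  linarith

end NBproof


-- ====== order lemmas ======

lemma nb_altLt_first {u v : ℕ → ℤ} (h : AltLt u v) {k0 : ℕ}
    (hpre : ∀ i < k0, u i = v i) (hne : u k0 ≠ v k0) :
    (-1 : ℤ) ^ (k0 + 1) * (u k0 - v k0) < 0 := by
  obtain ⟨k, pk, sk⟩ := h
  have hkk : k = k0 := by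
    rcases lt_trichotomy k k0 with h1 | h1 | h1
    · exfalso; rw [hpre k h1] at sk; simp at sk
    · exact h1
    · exfalso; exact hne (pk k0 h1)
  rwa [hkk] at sk

lemma nb_asym {u v : ℕ → ℤ} (h1 : AltLe u v) (h2 : AltLt v u) : False := by
  rcases h1 with rfl | ⟨k1, p1, s1⟩
  · obtain ⟨k, _, sk⟩ := h2; simp at sk
  · obtain ⟨k2, p2, s2⟩ := h2
    rcases lt_trichotomy k1 k2 with h | h | h
    · rw [p2 k1 h] at s1; simp at s1
    · subst h
      have : (-1 : ℤ) ^ (k1 + 1) * (v k1 - u k1)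
          = -((-1 : ℤ) ^ (k1 + 1) * (u k1 - v k1)) := by ring
      rw [this] at s2; linarith
    · rw [p1 k2 h] at s2; simp at s2

lemma nb_total (u v : ℕ → ℤ) : AltLe u v ∨ AltLt v u := by
  by_cases hall : ∀ i, u i = v i
  · exact Or.inl (Or.inl (funext hall))
  · push_neg at hall
    have hex : ∃ i, u i ≠ v i := hall
    classical
    let k := Nat.find hex
    have hk : u k ≠ v k := Nat.find_spec hex
    have hpre : ∀ i < k, u i = v i := fun i hi => by
      by_contra hc
      have h2 : Nat.find hex ≤ i := Nat.find_le hc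
      omega
    have hne0 : (-1 : ℤ) ^ (k + 1) * (u k - v k) ≠ 0 := by
      apply mul_ne_zero
      · exact pow_ne_zero _ (by norm_num)
      · exact sub_ne_zero.mpr hk
    rcases hne0.lt_or_gt with hlt | hgt
    · exact Or.inl (Or.inr ⟨k, hpre, hlt⟩)
    · refine Or.inr ⟨k, fun i hi => (hpre i hi).symm, ?_⟩
      have : (-1 : ℤ) ^ (k + 1) * (v k - u k)
          = -((-1 : ℤ) ^ (k + 1) * (u k - v k)) := by ring
      rw [this]; linarith

namespace NBproof

/-- monotonicity: the digit map is monotone from the real order to the alternate order -/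
lemma nb_mono (β : ℝ) (hβ : 1 < β) {x y : ℝ} (hxy : x ≤ y) :
    AltLe (fun i => negBetaDigit β x i) (fun i => negBetaDigit β y i) := by
  by_cases hall : ∀ i, negBetaDigit β x i = negBetaDigit β y i
  · exact Or.inl (funext hall)
  push_neg at hall
  classical
  let k := Nat.find hall
  have hk : negBetaDigit β x k ≠ negBetaDigit β y k := Nat.find_spec hall
  have hpre : ∀ i < k, negBetaDigit β x i = negBetaDigit β y i := fun i hi => by
    by_contra hc
    have h2 : Nat.find hall ≤ i := Nat.find_le hc
    omega
  have hsub := nb_iterate_sub β x y k hpre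
  have hb0 : (0:ℝ) < β := by linarith
  right
  refine ⟨k, hpre, ?_⟩
  show (-1 : ℤ) ^ (k + 1) * (negBetaDigit β x k - negBetaDigit β y k) < 0
  rcases Nat.even_or_odd k with he | ho
  · -- k even: T^k preserves order, digit reverses, sign (-1)^{k+1} = -1
    have hpow : ((-β) ^ k : ℝ) = β ^ k := by
      rw [neg_pow, Even.neg_one_pow he, one_mul]
    have hle : (negBetaT β)^[k] x ≤ (negBetaT β)^[k] y := by
      have h2 : (0:ℝ) ≤ β ^ k * (y - x) :=
        mul_nonneg (by positivity) (by linarith)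
      nlinarith [hsub]
    have hdig : negBetaDigit β y k ≤ negBetaDigit β x k := by
      simp only [negBetaDigit]
      apply Int.floor_le_floor
      have := mul_le_mul_of_nonneg_left hle hb0.le
      linarith
    have hgt : negBetaDigit β y k < negBetaDigit β x k :=
      lt_of_le_of_ne hdig (fun hcontra => hk hcontra.symm)
    have hsign : ((-1 : ℤ)) ^ (k + 1) = -1 := Odd.neg_one_pow (Even.add_one he)
    rw [hsign]
    have : (0:ℤ) < negBetaDigit β x k - negBetaDigit β y k := by omega
    linarith
  · -- k odd
    have hpow : ((-β) ^ k : ℝ) = -(β ^ k) := by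
      rw [neg_pow, Odd.neg_one_pow ho]; ring
    have hle : (negBetaT β)^[k] y ≤ (negBetaT β)^[k] x := by
      have h2 : (0:ℝ) ≤ β ^ k * (y - x) :=
        mul_nonneg (by positivity) (by linarith)
      nlinarith [hsub]
    have hdig : negBetaDigit β x k ≤ negBetaDigit β y k := by
      simp only [negBetaDigit]
      apply Int.floor_le_floor
      have := mul_le_mul_of_nonneg_left hle hb0.le
      linarith
    have hlt : negBetaDigit β x k < negBetaDigit β y k := lt_of_le_of_ne hdig hk
    have hsign : ((-1 : ℤ)) ^ (k + 1) = 1 := Even.neg_one_pow (Odd.add_one ho)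
    rw [hsign]
    omega

end NBproof
namespace NBproof

/-- perturbation lemma: away from digit boundaries the iterates move affinely -/
lemma nb_perturb (β : ℝ) (hβ : 1 < β) (z : ℝ) (R : ℕ)
    (hnb : ∀ j < R, Int.fract (-β * (negBetaT β)^[j] z + β / (β + 1)) ≠ 0) :
    ∃ ε > 0, ∀ t : ℝ, 0 ≤ t → t ≤ ε →
      ∀ j ≤ R, (negBetaT β)^[j] (z + t) = (negBetaT β)^[j] z + (-β) ^ j * t := by
  induction R with
  | zero =>
    refine ⟨1, one_pos, fun t _ _ j hj => ?_⟩
    interval_cases j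
    simp
  | succ R ih =>
    obtain ⟨ε, hε, hform⟩ := ih (fun j hj => hnb j (hj.trans (Nat.lt_succ_self R)))
    set v := -β * (negBetaT β)^[R] z + β / (β + 1) with hv
    have hfr0 : Int.fract v ≠ 0 := hnb R (Nat.lt_succ_self R)
    have hfrpos : 0 < Int.fract v := lt_of_le_of_ne (Int.fract_nonneg v) (Ne.symm hfr0)
    have hfrlt : Int.fract v < 1 := Int.fract_lt_one v
    have hbpos : (0:ℝ) < β := by linarith
    set δ := min (Int.fract v) (1 - Int.fract v) with hδdef
    have hδpos : 0 < δ := lt_min hfrpos (by linarith)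
    refine ⟨min ε (δ / (2 * β ^ (R + 1))), lt_min hε (by positivity), fun t ht0 htε j hj => ?_⟩
    have htε' : t ≤ ε := htε.trans (min_le_left _ _)
    have htδ : t ≤ δ / (2 * β ^ (R + 1)) := htε.trans (min_le_right _ _)
    rcases Nat.lt_or_ge j (R + 1) with hjR | hjR
    · exact hform t ht0 htε' j (by omega)
    · have hjeq : j = R + 1 := by omega
      subst hjeq
      have hR := hform t ht0 htε' R le_rfl
      rw [Function.iterate_succ_apply', Function.iterate_succ_apply', hR]
      have habs : |(-β) ^ (R + 1) * t| ≤ δ / 2 := by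
        rw [abs_mul, abs_pow, abs_neg, abs_of_pos hbpos, abs_of_nonneg ht0]
        have hb1 : (0:ℝ) < β ^ (R+1) := by positivity
        calc β ^ (R+1) * t ≤ β ^ (R+1) * (δ / (2 * β ^ (R + 1))) :=
              mul_le_mul_of_nonneg_left htδ hb1.le
          _ = δ / 2 := by field_simp
      have h12 := abs_le.mp habs
      have hδ1 : δ ≤ Int.fract v := min_le_left _ _
      have hδ2 : δ ≤ 1 - Int.fract v := min_le_right _ _
      have hfr : Int.fract v = v - ⌊v⌋ := rfl
      have hfloor : ⌊v + (-β) ^ (R + 1) * t⌋ = ⌊v⌋ := by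
        rw [Int.floor_eq_iff]
        constructor
        · nlinarith [h12.1]
        · push_cast
          nlinarith [h12.2]
      simp only [negBetaT]
      have harg : -β * ((negBetaT β)^[R] z + (-β) ^ R * t) + β / (β + 1)
          = v + (-β) ^ (R + 1) * t := by
        rw [hv]; ring
      rw [harg, hfloor]
      ring

end NBproof

namespace NBproof

/-- canonical one-sided-to-two-sided word: zeros to the left, digits of x to the right -/
noncomputable def nbW (β x : ℝ) : ℤ → ℤ :=
  fun n => if n < 0 then 0 else negBetaDigit β x n.toNat

lemma nb_caseB (β : ℝ)
    (hno : ¬ ∃ p : ℕ, 0 < p ∧ Odd p ∧ ∀ i, dmb β (i + p) = dmb β i) :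
    dstar β = fun n => if n = 0 then 0 else dmb β (n - 1) := by
  simp only [dstar, dif_neg hno]

/-- prepending a zero to something above d gives something below d* (case B) -/
lemma nb_zero_cons (β : ℝ)
    (hB : dstar β = fun n => if n = 0 then 0 else dmb β (n - 1))
    {u t : ℕ → ℤ} (h : AltLe (dmb β) u) (ht0 : t 0 = 0) (hts : ∀ j, t (j + 1) = u j) :
    AltLe t (dstar β) := by
  rcases h with heq | ⟨k, pk, sk⟩
  · left
    funext n
    rw [hB]
    cases n with
    | zero => simpa using ht0
    | succ n => simp [hts n, ← congrFun heq n]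
  · right
    refine ⟨k + 1, ?_, ?_⟩
    · intro i hi
      rw [hB]
      cases i with
      | zero => simpa using ht0
      | succ j => simp [hts j, (pk j (by omega)).symm]
    · rw [hB]
      simp only [Nat.succ_ne_zero, if_false, Nat.add_sub_cancel]
      rw [hts k]
      have : (-1 : ℤ) ^ (k + 1 + 1) * (u k - dmb β k)
          = (-1 : ℤ) ^ (k + 1) * (dmb β k - u k) := by ring
      rw [this]
      exact sk

/-- any expansion word, right part of an S-word: the upper bound (case B) -/
lemma nb_up (β : ℝ) (hβ : 1 < β)
    (hB : dstar β = fun n => if n = 0 then 0 else dmb β (n - 1))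
    {x : ℝ} (hx : nbI β x) :
    AltLe (fun i => negBetaDigit β x i) (dstar β) := by
  have h0 := (nb_digit_bounds β hβ hx 0).1
  rcases lt_or_eq_of_le h0 with hpos | hzero
  · right
    refine ⟨0, by omega, ?_⟩
    rw [hB]
    show (-1 : ℤ) ^ (0 + 1) * (negBetaDigit β x 0 - 0) < 0
    have : (-1 : ℤ) ^ (0 + 1) * (negBetaDigit β x 0 - 0) = -(negBetaDigit β x 0) := by ring
    rw [this]
    omega
  · have hTx : nbI β (negBetaT β x) := nbT_mem β x
    have hmono : AltLe (dmb β) (fun i => negBetaDigit β (negBetaT β x) i) := by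
      rw [nb_dmb_eq β]
      exact nb_mono β hβ hTx.1
    exact nb_zero_cons β hB hmono hzero.symm (fun j => by
      show negBetaDigit β x (j + 1) = negBetaDigit β (negBetaT β x) j
      rw [add_comm, nb_digit_shift]
      simp)

/-- main membership lemma: 0^∞ ⌢ d(x) lies in the shift (case B) -/
lemma nb_mem (β : ℝ) (hβ : 1 < β)
    (hB : dstar β = fun n => if n = 0 then 0 else dmb β (n - 1))
    {x : ℝ} (hx : nbI β x) :
    nbW β x ∈ negBetaShift β := by
  have h1le : (1:ℤ) ≤ ⌊β⌋ := Int.le_floor.mpr (by exact_mod_cast hβ.le)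
  constructor
  · intro i
    simp only [nbW]
    split
    · omega
    · exact nb_digit_bounds β hβ hx _
  · intro n
    rcases le_or_gt 0 n with hn | hn
    · -- tail is the expansion of T^[n.toNat] x
      have htail : shiftSeq (nbW β x) n = fun i => negBetaDigit β ((negBetaT β)^[n.toNat] x) i := by
        funext i
        simp only [shiftSeq, nbW]
        rw [if_neg (by omega)]
        rw [← nb_digit_shift]
        congr 1
        omega
      rw [htail]
      have hmem : nbI β ((negBetaT β)^[n.toNat] x) := nb_iter_mem β hβ hx n.toNat
      constructor
      · rw [nb_dmb_eq β]
        exact nb_mono β hβ hmem.1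
      · exact nb_up β hβ hB hmem
    · -- tail starts with zeros
      have h0 : shiftSeq (nbW β x) n 0 = 0 := by
        simp only [shiftSeq, nbW]
        rw [if_pos (by omega)]
      constructor
      · right
        refine ⟨0, by omega, ?_⟩
        rw [h0, nb_dmb0 β hβ]
        have : (-1 : ℤ) ^ (0 + 1) * (⌊β⌋ - 0) = -⌊β⌋ := by ring
        rw [this]; omega
      · rcases eq_or_lt_of_le (by omega : n ≤ -1) with hn1 | hn2
        · -- n = -1 : tail = 0 ⌢ d(x)
          have hmono : AltLe (dmb β) (fun i => negBetaDigit β x i) := by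
            rw [nb_dmb_eq β]
            exact nb_mono β hβ hx.1
          refine nb_zero_cons β hB hmono h0 (fun j => ?_)
          simp only [shiftSeq, nbW]
          rw [if_neg (by omega)]
          congr 1
          omega
        · -- n ≤ -2 : tail = 0 0 … ≺ d*
          right
          refine ⟨1, ?_, ?_⟩
          · intro i hi
            interval_cases i
            rw [h0, hB]
            rfl
          · have h1 : shiftSeq (nbW β x) n 1 = 0 := by
              simp only [shiftSeq, nbW]
              rw [if_pos (by omega)]
            rw [h1, hB]
            simp only [Nat.one_ne_zero, if_false]
            norm_num
            rw [nb_dmb0 β hβ]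
            omega

end NBproof
namespace NBproof

lemma nb_forward (β : ℝ) (hβ : 1 < β) (X : Finset (List ℤ))
    (hX : negBetaShift β =
      {w | (∀ i, 0 ≤ w i ∧ w i ≤ ⌊β⌋) ∧ ∀ u ∈ X, ¬ IsFactorOf u w}) :
    ∃ p : ℕ, 0 < p ∧ ∀ i, dmb β (i + p) = dmb β i := by
  by_contra hnp
  have hno : ¬ ∃ p : ℕ, 0 < p ∧ Odd p ∧ ∀ i, dmb β (i + p) = dmb β i := by
    rintro ⟨p, h1, _, h3⟩; exact hnp ⟨p, h1, h3⟩
  have hB := nb_caseB β hno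
  set x₀ : ℝ := -nbC β with hx₀def
  have hx₀mem : nbI β x₀ := nbx0_mem β hβ
  have hdmb : ∀ j : ℕ, dmb β j = negBetaDigit β x₀ j := fun j => congrFun (nb_dmb_eq β) j
  have hnoret : ∀ t : ℕ, 0 < t → (negBetaT β)^[t] x₀ ≠ x₀ := by
    intro t ht hret
    refine hnp ⟨t, ht, fun i => ?_⟩
    rw [hdmb, hdmb, add_comm i t, nb_digit_shift, hret]
  have hnonb : ∀ s : ℕ, Int.fract (-β * (negBetaT β)^[s] x₀ + β / (β + 1)) ≠ 0 := by
    intro s hfr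
    apply hnoret (s + 1) (Nat.succ_pos s)
    rw [Function.iterate_succ_apply', nbT_eq]
    simp only [nbC] at hfr ⊢
    rw [hfr]
    simp [hx₀def, nbC]
  obtain ⟨N, hlen⟩ : ∃ N : ℕ, ∀ u ∈ X, u.length < N :=
    ⟨X.sup List.length + 1, fun u hu => Nat.lt_succ_of_le (Finset.le_sup hu)⟩
  obtain ⟨K, hKodd, hKgtN⟩ : ∃ K : ℕ, Odd K ∧ N < K := ⟨2 * N + 1, ⟨N, by omega⟩, by omega⟩
  set z : ℝ := (negBetaT β)^[K] x₀ with hzdef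
  have hzI : nbI β z := nb_iter_mem β hβ hx₀mem K
  obtain ⟨ε, hε, hform⟩ := nb_perturb β hβ z N (fun j _ => by
    rw [hzdef, ← Function.iterate_add_apply, add_comm j K]
    exact hnonb (K + j))
  set t : ℝ := min ε ((1 - nbC β - z) / 2) with htdef
  have ht0 : 0 < t := lt_min hε (by have := hzI.2; linarith)
  set y : ℝ := z + t with hydef
  have hyI : nbI β y := by
    constructor
    · have := hzI.1; rw [hydef]; linarith
    · have h2 : t ≤ (1 - nbC β - z) / 2 := min_le_right _ _
      have := hzI.2; rw [hydef]; linarith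
  have hdigcast : ∀ (x : ℝ) (j : ℕ), (negBetaDigit β x j : ℝ)
      = -β * (negBetaT β)^[j] x - (negBetaT β)^[j+1] x := by
    intro x j
    rw [Function.iterate_succ_apply']
    simp only [negBetaT, negBetaDigit]
    ring
  have hagree : ∀ j < N, negBetaDigit β y j = negBetaDigit β z j := by
    intro j hj
    have hfj := hform t ht0.le (min_le_left _ _) j hj.le
    have hfj1 := hform t ht0.le (min_le_left _ _) (j+1) hj
    have hcast : (negBetaDigit β y j : ℝ) = (negBetaDigit β z j : ℝ) := by
      rw [hdigcast, hdigcast, hydef, hfj, hfj1]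
      ring
    exact_mod_cast hcast
  have hzy : z < y := by rw [hydef]; linarith
  have hex : ∃ i, negBetaDigit β z i ≠ negBetaDigit β y i := by
    by_contra hall
    push_neg at hall
    have := nb_inj β hβ hzI hyI hall
    linarith
  classical
  have hrne : negBetaDigit β z (Nat.find hex) ≠ negBetaDigit β y (Nat.find hex) :=
    Nat.find_spec hex
  have hrpre : ∀ i < Nat.find hex, negBetaDigit β z i = negBetaDigit β y i := by
    intro i hi
    by_contra hc
    have h9 : Nat.find hex ≤ i := Nat.find_le hc
    omega
  set r : ℕ := Nat.find hex with hrdef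
  have hrN : N ≤ r := by
    by_contra hc
    exact hrne (hagree r (by omega)).symm
  set w : ℤ → ℤ := fun n =>
    if n < 0 then 0 else if n < (K:ℤ) then dmb β n.toNat else negBetaDigit β y (n - K).toNat
    with hwdef
  have hdKz : ∀ i : ℕ, K ≤ i → dmb β i = negBetaDigit β z (i - K) := by
    intro i hi
    have h1 : dmb β (K + (i - K)) = negBetaDigit β z (i - K) := by
      rw [hdmb, nb_digit_shift, ← hzdef]
    rwa [show K + (i - K) = i from by omega] at h1
  have hw_eq1 : ∀ m : ℤ, m < (K:ℤ) + N → w m = nbW β x₀ m := by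
    intro m hm
    simp only [hwdef, nbW]
    split
    · rfl
    · rename_i hm0
      push_neg at hm0
      split
      · rw [hdmb]
      · rename_i hmK
        push_neg at hmK
        have h2 : (m - K).toNat = m.toNat - K := by omega
        rw [h2, ← hdmb, hdKz m.toNat (by omega)]
        exact hagree _ (by omega)
  have hw_eq2 : ∀ m : ℤ, (K:ℤ) ≤ m → w m = nbW β y (m - (K:ℤ)) := by
    intro m hm
    simp only [hwdef, nbW]
    rw [if_neg (by omega), if_neg (by omega), if_neg (by omega)]
  have hWx₀ : nbW β x₀ ∈ negBetaShift β := nb_mem β hβ hB hx₀mem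
  have hWy : nbW β y ∈ negBetaShift β := nb_mem β hβ hB hyI
  have hWx₀' := hX ▸ hWx₀
  have hWy' := hX ▸ hWy
  have h1le : (1:ℤ) ≤ ⌊β⌋ := Int.le_floor.mpr (by exact_mod_cast hβ.le)
  have hwS : w ∈ negBetaShift β := by
    rw [hX]
    constructor
    · intro i
      simp only [hwdef]
      split
      · omega
      · split
        · rw [hdmb]; exact nb_digit_bounds β hβ hx₀mem _
        · exact nb_digit_bounds β hβ hyI _
    · rintro u hu ⟨n₀, hocc⟩
      have hul : u.length < N := hlen u hu
      by_cases hsplit : n₀ + u.length ≤ (K:ℤ) + N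
      · refine hWx₀'.2 u hu ⟨n₀, fun i hi => ?_⟩
        rw [hocc i hi, hw_eq1 (n₀ + i) (by omega)]
      · push_neg at hsplit
        refine hWy'.2 u hu ⟨n₀ - K, fun i hi => ?_⟩
        rw [hocc i hi, hw_eq2 (n₀ + i) (by omega)]
        congr 1
        ring
  have htail := (hwS.2 0).1
  have htail_eq : ∀ i : ℕ, i < K + r → shiftSeq w 0 i = dmb β i := by
    intro i hi
    simp only [shiftSeq, hwdef, zero_add]
    rw [if_neg (by omega)]
    split
    · simp
    · rename_i hKi
      push_neg at hKi
      have h2 : ((i:ℤ) - K).toNat = i - K := by omega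
      rw [h2, hdKz i (by omega)]
      exact (hrpre (i - K) (by omega)).symm
  have e1 : shiftSeq w 0 (K + r) = negBetaDigit β y r := by
    simp only [shiftSeq, hwdef, zero_add]
    rw [if_neg (by omega), if_neg (by omega)]
    congr 1
    omega
  have htail_ne : shiftSeq w 0 (K + r) ≠ dmb β (K + r) := by
    rw [e1, hdKz (K + r) (by omega), show K + r - K = r from by omega]
    exact fun h => hrne h.symm
  rcases htail with heq | hlt
  · exact htail_ne (congrFun heq (K + r)).symm
  · have s1 := nb_altLt_first hlt (k0 := K + r)
      (fun i hi => (htail_eq i hi).symm) (fun h => htail_ne h.symm)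
    have hmono := nb_mono β hβ hzy.le
    rcases hmono with heq2 | hlt2
    · exact hrne (congrFun heq2 r)
    · have s2 := nb_altLt_first hlt2 (k0 := r) (fun i hi => hrpre i hi) hrne
      rw [e1, hdKz (K + r) (by omega), show K + r - K = r from by omega] at s1
      have hpow : (-1 : ℤ) ^ (K + r + 1) = -((-1 : ℤ) ^ (r + 1)) := by
        rw [show K + r + 1 = (r + 1) + K from by omega, pow_add, Odd.neg_one_pow hKodd]
        ring
      rw [hpow] at s1
      linarith

end NBproof
namespace NBproof

lemma nb_getD_lt (f : ℕ → ℤ) (k : ℕ) (c : ℤ) (i : ℕ) (hi : i < k) :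
    ((List.ofFn (fun j : Fin k => f j)) ++ [c]).getD i 0 = f i := by
  rw [List.getD_append _ _ _ _ (by simpa using hi)]
  rw [List.getD_eq_getElem _ _ (by simpa using hi)]
  simp

lemma nb_getD_eq (f : ℕ → ℤ) (k : ℕ) (c : ℤ) :
    ((List.ofFn (fun j : Fin k => f j)) ++ [c]).getD k 0 = c := by
  rw [List.getD_append_right _ _ _ _ (by simp)]
  simp

lemma nb_len (f : ℕ → ℤ) (k : ℕ) (c : ℤ) :
    ((List.ofFn (fun j : Fin k => f j)) ++ [c]).length = k + 1 := by simp

/-- short bad words w.r.t. a reference sequence `v` with sign `ς` -/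
noncomputable def nbBad (β : ℝ) (Kb : ℕ) (v : ℕ → ℤ) (ς : ℤ) : Finset (List ℤ) :=
  ((Finset.range (Kb+1)) ×ˢ (Finset.Icc (0:ℤ) ⌊β⌋)).filter
    (fun kc => (-1:ℤ)^(kc.1+1) * ς * (kc.2 - v kc.1) < 0) |>.image
    (fun kc => (List.ofFn (fun i : Fin kc.1 => v i)) ++ [kc.2])

lemma nb_mem_nbBad (β : ℝ) (Kb : ℕ) (v : ℕ → ℤ) (ς : ℤ) (k : ℕ) (c : ℤ)
    (hk : k ≤ Kb) (hc0 : 0 ≤ c) (hc1 : c ≤ ⌊β⌋)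
    (hsgn : (-1:ℤ)^(k+1) * ς * (c - v k) < 0) :
    (List.ofFn (fun i : Fin k => v i)) ++ [c] ∈ nbBad β Kb v ς := by
  refine Finset.mem_image.mpr ⟨(k, c), Finset.mem_filter.mpr ⟨?_, hsgn⟩, rfl⟩
  exact Finset.mem_product.mpr ⟨Finset.mem_range.mpr (by omega), Finset.mem_Icc.mpr ⟨hc0, hc1⟩⟩

/-- a factor occurrence of a bad word yields a violation -/
lemma nb_bad_elim (β : ℝ) (Kb : ℕ) (v : ℕ → ℤ) (ς : ℤ) (w : ℤ → ℤ)
    {u : List ℤ} (hu : u ∈ nbBad β Kb v ς) (hfac : IsFactorOf u w) :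
    ∃ (n : ℤ) (k : ℕ), (∀ i < k, shiftSeq w n i = v i) ∧
      (-1:ℤ)^(k+1) * ς * (shiftSeq w n k - v k) < 0 := by
  obtain ⟨⟨k, c⟩, hflt, rfl⟩ := Finset.mem_image.mp hu
  have hsgn := (Finset.mem_filter.mp hflt).2
  obtain ⟨n, hocc⟩ := hfac
  refine ⟨n, k, fun i hi => ?_, ?_⟩
  · have := hocc i (by rw [nb_len]; omega)
    rw [nb_getD_lt _ _ _ _ hi] at this
    exact this.symm
  · have := hocc k (by rw [nb_len]; omega)
    rw [nb_getD_eq] at this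
    show (-1:ℤ)^(k+1) * ς * (w (n + (k:ℤ)) - v k) < 0
    rw [← this]
    exact hsgn

/-- the kernel of the SFT direction: violations reduce to short violations,
which are excluded by avoiding the bad words -/
lemma nb_red (β : ℝ) (w : ℤ → ℤ) (v : ℕ → ℤ) (ς : ℤ) (q Kb : ℕ)
    (hq : ∀ i, v (i + q) = v i) (hqe : Even q) (hq0 : 0 < q) (hqK : q ≤ Kb)
    (hbd : ∀ i, 0 ≤ w i ∧ w i ≤ ⌊β⌋)
    (hnofac : ∀ u ∈ nbBad β Kb v ς, ¬ IsFactorOf u w) :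
    ∀ (k : ℕ) (n : ℤ), (∀ i < k, shiftSeq w n i = v i) →
      (-1:ℤ)^(k+1) * ς * (shiftSeq w n k - v k) < 0 → False := by
  intro k
  induction k using Nat.strong_induction_on with
  | _ k ih =>
    intro n hpre hsgn
    rcases le_or_gt k Kb with hk | hk
    · -- short violation: exhibit the bad factor
      set c := shiftSeq w n k with hcdef
      have hc0 : 0 ≤ c := (hbd (n + k)).1
      have hc1 : c ≤ ⌊β⌋ := (hbd (n + k)).2
      apply hnofac _ (nb_mem_nbBad β Kb v ς k c hk hc0 hc1 hsgn)
      refine ⟨n, fun i hi => ?_⟩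
      rw [nb_len] at hi
      rcases Nat.lt_or_ge i k with h | h
      · rw [nb_getD_lt _ _ _ _ h]
        exact (hpre i h).symm
      · have hik : i = k := by omega
        subst hik
        rw [nb_getD_eq]
        rfl
    · -- long violation: shift by the even period q
      apply ih (k - q) (by omega) (n + q)
      · intro i hi
        have h1 : shiftSeq w (n + q) i = shiftSeq w n (q + i) := by
          simp only [shiftSeq]
          congr 1
          push_cast
          ring
        rw [h1, hpre (q + i) (by omega), add_comm q i, hq]
      · have h1 : shiftSeq w (n + q) (k - q) = shiftSeq w n k := by
          simp only [shiftSeq]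
          congr 1
          push_cast
          omega
        have h2 : v (k - q) = v k := by
          conv_rhs => rw [show k = (k - q) + q from by omega, hq]
        have h3 : ((-1:ℤ))^(k - q + 1) = (-1:ℤ)^(k+1) := by
          conv_rhs => rw [show k + 1 = (k - q + 1) + q from by omega, pow_add,
            Even.neg_one_pow hqe, mul_one]
        rw [h1, h2, h3]
        exact hsgn

lemma nb_caseA (β : ℝ)
    (hodd : ∃ p : ℕ, 0 < p ∧ Odd p ∧ ∀ i, dmb β (i + p) = dmb β i) :
    dstar β = fun n =>
      if n % (Nat.find hodd + 1) = 0 then 0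
      else if n % (Nat.find hodd + 1) = Nat.find hodd then dmb β (Nat.find hodd - 1) - 1
      else dmb β (n % (Nat.find hodd + 1) - 1) := by
  simp only [dstar, dif_pos hodd]

lemma nb_dstarA_per (β : ℝ)
    (hodd : ∃ p : ℕ, 0 < p ∧ Odd p ∧ ∀ i, dmb β (i + p) = dmb β i) :
    ∀ n, dstar β (n + (Nat.find hodd + 1)) = dstar β n := by
  intro n
  rw [nb_caseA β hodd]
  simp only [Nat.add_mod_right]

lemma nb_backward (β : ℝ) (hβ : 1 < β) (p : ℕ) (hp : 0 < p)
    (hper : ∀ i, dmb β (i + p) = dmb β i) :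
    ∃ X : Finset (List ℤ),
      negBetaShift β =
        {w | (∀ i, 0 ≤ w i ∧ w i ≤ ⌊β⌋) ∧ ∀ u ∈ X, ¬ IsFactorOf u w} := by
  classical
  have hq : ∀ i, dmb β (i + 2*p) = dmb β i := fun i => by
    rw [show i + 2*p = (i + p) + p from by ring, hper, hper]
  have hqe : Even (2*p) := ⟨p, by ring⟩
  have hq0 : 0 < 2*p := by omega
  by_cases hodd : ∃ p' : ℕ, 0 < p' ∧ Odd p' ∧ ∀ i, dmb β (i + p') = dmb β i
  · -- case A: d* is purely periodic with even period P+1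
    obtain ⟨hP0, hPodd, hPper⟩ := Nat.find_spec hodd
    set P := Nat.find hodd with hPdef
    have hqe' : Even (P + 1) := Odd.add_one hPodd
    refine ⟨nbBad β (2*p) (dmb β) 1 ∪ nbBad β (P+1) (dstar β) (-1), ?_⟩
    ext w
    simp only [negBetaShift, Set.mem_setOf_eq]
    constructor
    · rintro ⟨hbd, hs⟩
      refine ⟨hbd, fun u hu hfac => ?_⟩
      rcases Finset.mem_union.mp hu with huL | huU
      · obtain ⟨n, k, hpre, hsgn⟩ := nb_bad_elim β _ _ _ w huL hfac
        refine nb_asym (hs n).1 ⟨k, hpre, ?_⟩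
        have : (-1:ℤ)^(k+1) * (shiftSeq w n k - dmb β k)
            = (-1:ℤ)^(k+1) * 1 * (shiftSeq w n k - dmb β k) := by ring
        rw [this]
        exact hsgn
      · obtain ⟨n, k, hpre, hsgn⟩ := nb_bad_elim β _ _ _ w huU hfac
        refine nb_asym (hs n).2 ⟨k, fun i hi => (hpre i hi).symm, ?_⟩
        have : (-1:ℤ)^(k+1) * (dstar β k - shiftSeq w n k)
            = (-1:ℤ)^(k+1) * (-1) * (shiftSeq w n k - dstar β k) := by ring
        rw [this]
        exact hsgn
    · rintro ⟨hbd, havoid⟩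
      have hnofacL : ∀ u ∈ nbBad β (2*p) (dmb β) 1, ¬ IsFactorOf u w :=
        fun u hu => havoid u (Finset.mem_union_left _ hu)
      have hnofacU : ∀ u ∈ nbBad β (P+1) (dstar β) (-1), ¬ IsFactorOf u w :=
        fun u hu => havoid u (Finset.mem_union_right _ hu)
      refine ⟨hbd, fun n => ⟨?_, ?_⟩⟩
      · rcases nb_total (dmb β) (shiftSeq w n) with h | ⟨k, hpre, hsgn⟩
        · exact h
        · exfalso
          refine nb_red β w (dmb β) 1 (2*p) (2*p) hq hqe hq0 le_rfl hbd hnofacL k n hpre ?_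
          have : (-1:ℤ)^(k+1) * 1 * (shiftSeq w n k - dmb β k)
              = (-1:ℤ)^(k+1) * (shiftSeq w n k - dmb β k) := by ring
          rw [this]
          exact hsgn
      · rcases nb_total (shiftSeq w n) (dstar β) with h | ⟨k, hpre, hsgn⟩
        · exact h
        · exfalso
          refine nb_red β w (dstar β) (-1) (P+1) (P+1) (nb_dstarA_per β hodd) hqe'
            (by omega) le_rfl hbd hnofacU k n (fun i hi => (hpre i hi).symm) ?_
          have : (-1:ℤ)^(k+1) * (-1) * (shiftSeq w n k - dstar β k)
              = (-1:ℤ)^(k+1) * (dstar β k - shiftSeq w n k) := by ring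
          rw [this]
          exact hsgn
  · -- case B: d* = 0 d
    have hB := nb_caseB β hodd
    refine ⟨nbBad β (2*p) (dmb β) 1, ?_⟩
    ext w
    simp only [negBetaShift, Set.mem_setOf_eq]
    constructor
    · rintro ⟨hbd, hs⟩
      refine ⟨hbd, fun u hu hfac => ?_⟩
      obtain ⟨n, k, hpre, hsgn⟩ := nb_bad_elim β _ _ _ w hu hfac
      refine nb_asym (hs n).1 ⟨k, hpre, ?_⟩
      have : (-1:ℤ)^(k+1) * (shiftSeq w n k - dmb β k)
          = (-1:ℤ)^(k+1) * 1 * (shiftSeq w n k - dmb β k) := by ring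
      rw [this]
      exact hsgn
    · rintro ⟨hbd, havoid⟩
      have hL : ∀ (k : ℕ) (n : ℤ), (∀ i < k, shiftSeq w n i = dmb β i) →
          (-1:ℤ)^(k+1) * (shiftSeq w n k - dmb β k) < 0 → False := by
        intro k n hpre hsgn
        refine nb_red β w (dmb β) 1 (2*p) (2*p) hq hqe hq0 le_rfl hbd havoid k n hpre ?_
        have : (-1:ℤ)^(k+1) * 1 * (shiftSeq w n k - dmb β k)
            = (-1:ℤ)^(k+1) * (shiftSeq w n k - dmb β k) := by ring
        rw [this]
        exact hsgn
      refine ⟨hbd, fun n => ⟨?_, ?_⟩⟩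
      · rcases nb_total (dmb β) (shiftSeq w n) with h | ⟨k, hpre, hsgn⟩
        · exact h
        · exact absurd hsgn (by intro hs; exact hL k n hpre hs)
      · rcases nb_total (shiftSeq w n) (dstar β) with h | ⟨k, hpre, hsgn⟩
        · exact h
        · exfalso
          cases k with
          | zero =>
            have h0 : (0:ℤ) ≤ shiftSeq w n 0 := (hbd (n + ((0:ℕ):ℤ))).1
            rw [hB] at hsgn
            simp at hsgn
            omega
          | succ k =>
            apply hL k (n + 1)
            · intro i hi
              have h1 : shiftSeq w (n + 1) i = shiftSeq w n (i + 1) := by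
                simp only [shiftSeq]
                congr 1
                push_cast
                ring
              rw [h1, ← hpre (i + 1) (by omega), hB]
              simp
            · have h1 : shiftSeq w (n + 1) k = shiftSeq w n (k + 1) := by
                simp only [shiftSeq]
                congr 1
                push_cast
                ring
              have h2 : dmb β k = dstar β (k + 1) := by
                rw [hB]
                simp
              have h3 : (-1:ℤ)^(k+1) * (shiftSeq w n (k+1) - dstar β (k+1))
                  = (-1:ℤ)^(k+1+1) * (dstar β (k+1) - shiftSeq w n (k+1)) := by
                ring
              rw [h1, h2, h3]
              exact hsgn

end NBproof

/-- The (-β)-shift is a subshift of finite type (the set of bi-infinite words over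
`A_{-β}` avoiding some finite set `X` of finite words) if and only if
`d_{-β}(-β/(β+1))` is purely periodic. -/
theorem negBetaShift_finiteType_iff_purely_periodic (β : ℝ) (hβ : 1 < β) :
    (∃ X : Finset (List ℤ),
        negBetaShift β =
          {w | (∀ i, 0 ≤ w i ∧ w i ≤ ⌊β⌋) ∧ ∀ u ∈ X, ¬ IsFactorOf u w}) ↔
      ∃ p : ℕ, 0 < p ∧ ∀ i, dmb β (i + p) = dmb β i := by
  constructor
  · rintro ⟨X, hX⟩
    exact NBproof.nb_forward β hβ X hX
  · rintro ⟨p, hp, hper⟩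
    exact NBproof.nb_backward β hβ p hp hper
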